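/- For k > 0, the weighted sharpened signal D_k(x) = L(x) − kL''(x) is nonnegative for all real x if and only if k ≤ (8/9)w². -/

import Mathlib

/-- For `k > 0`, the weighted sharpened signal `D_k(x) = L(x) − kL''(x)`
is nonnegative for all real `x` if and only if `k ≤ (8/9)w²`. -/
theorem weighted_sharpened_signal_nonneg_iff (w h k : ℝ) (hw : 0 < w) (hh : 0 < h)
    (hk : 0 < k) :
    (∀ x : ℝ,
        0 ≤ w ^ 2 * h / (x ^ 2 + w ^ 2)
              - k * (2 * w ^ 2 * h * (3 * x ^ 2 - w ^ 2) / (x ^ 2 + w ^ 2) ^ 3))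
      ↔ k ≤ 8 / 9 * w ^ 2 := by
  have key : ∀ x : ℝ,
      w ^ 2 * h / (x ^ 2 + w ^ 2)
        - k * (2 * w ^ 2 * h * (3 * x ^ 2 - w ^ 2) / (x ^ 2 + w ^ 2) ^ 3)
      = w ^ 2 * h * ((x ^ 2 + w ^ 2) ^ 2 - 2 * k * (3 * x ^ 2 - w ^ 2))
          / (x ^ 2 + w ^ 2) ^ 3 := by
    intro x
    have hp : x ^ 2 + w ^ 2 ≠ 0 := by positivity
    field_simp
  constructor
  · intro H
    rcases le_or_gt (3 * k) (w ^ 2) with h1 | h1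
    · nlinarith
    · set x := Real.sqrt (3 * k - w ^ 2) with hx
      have hx2 : x ^ 2 = 3 * k - w ^ 2 := Real.sq_sqrt (by linarith)
      have := H x
      rw [key x, hx2] at this
      have h3 : (3 * k - w ^ 2 + w ^ 2) = 3 * k := by ring
      rw [h3] at this
      have hden : (0:ℝ) < (3 * k) ^ 3 := by positivity
      have hA := mul_nonneg this hden.le
      rw [div_mul_cancel₀ _ (ne_of_gt hden)] at hA
      have hwh : (0:ℝ) < w ^ 2 * h := by positivity
      have hB : 0 ≤ (3 * k) ^ 2 - 2 * k * (3 * (3 * k - w ^ 2) - w ^ 2) := by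
        nlinarith [hA, hwh]
      nlinarith [hB, hk]
  · intro hk9 x
    rw [key x]
    have hnum : 0 ≤ (x ^ 2 + w ^ 2) ^ 2 - 2 * k * (3 * x ^ 2 - w ^ 2) := by
      nlinarith [sq_nonneg (x ^ 2 + w ^ 2 - 3 * k), mul_nonneg hk.le (by nlinarith : (0:ℝ) ≤ 8 * w ^ 2 - 9 * k)]
    positivity
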